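/- Suppose H is symmetric positive definite with λ₁ I ⪯ H ⪯ λₙ I (0 < λ₁ ≤ λₙ), and s ≠ 0 satisfies sᵀHs = −sᵀg and ‖Hs + g‖ ≤ η̄‖g‖ with η̄ ∈ (0,1). Then with κ₁ = (1−η̄)/λₙ and β = λ₁: βκ₁ ≤ |gᵀs|/(‖g‖‖s‖) ≤ 1 and −gᵀs ≥ βκ₁²‖g‖². -/
import Mathlib


open scoped RealInnerProductSpace

/-- Angle and decrease bounds for the inexact Newton/CG step. -/
theorem stmt_4 {n : ℕ} (H : EuclideanSpace ℝ (Fin n) →L[ℝ] EuclideanSpace ℝ (Fin n))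
    (g s : EuclideanSpace ℝ (Fin n)) (lam1 lamn etabar : ℝ)
    (hlam1 : 0 < lam1) (hlamn : lam1 ≤ lamn)
    (hsym : ∀ u v, ⟪H u, v⟫ = ⟪u, H v⟫)
    (hspec : ∀ v, lam1 * ‖v‖ ^ 2 ≤ ⟪v, H v⟫ ∧ ⟪v, H v⟫ ≤ lamn * ‖v‖ ^ 2)
    (hs : s ≠ 0) (hg : g ≠ 0)
    (hcg : ⟪s, H s⟫ = -⟪s, g⟫)
    (hres : ‖H s + g‖ ≤ etabar * ‖g‖)
    (hetabar : 0 < etabar) (hbar1 : etabar < 1) :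
    lam1 * ((1 - etabar) / lamn) ≤ |⟪g, s⟫| / (‖g‖ * ‖s‖) ∧
      |⟪g, s⟫| / (‖g‖ * ‖s‖) ≤ 1 ∧
      -⟪g, s⟫ ≥ lam1 * ((1 - etabar) / lamn) ^ 2 * ‖g‖ ^ 2 := by
  have hlamn0 : 0 < lamn := lt_of_lt_of_le hlam1 hlamn
  have hsn : 0 < ‖s‖ := norm_pos_iff.mpr hs
  have hgn : 0 < ‖g‖ := norm_pos_iff.mpr hg
  have hsym' : ∀ v w : EuclideanSpace ℝ (Fin n), ⟪v, H w⟫ = ⟪w, H v⟫ := by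
    intro v w; rw [← hsym w v, real_inner_comm]
  -- Cauchy–Schwarz for the positive form
  have cs : ∀ v w : EuclideanSpace ℝ (Fin n), ⟪v, H w⟫ ^ 2 ≤ ⟪v, H v⟫ * ⟪w, H w⟫ := by
    intro v w
    have h := discrim_le_zero (a := ⟪w, H w⟫) (b := 2 * ⟪v, H w⟫) (c := ⟪v, H v⟫) ?_
    · unfold discrim at h; nlinarith [h]
    · intro t
      have key : ⟪w, H w⟫ * t ^ 2 + 2 * ⟪v, H w⟫ * t + ⟪v, H v⟫
          = ⟪v + t • w, H (v + t • w)⟫ := by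
        have hHadd : H (v + t • w) = H v + t • H w := by
          rw [map_add, map_smul]
        rw [hHadd]
        simp only [inner_add_left, inner_add_right, real_inner_smul_left,
          real_inner_smul_right, hsym' w v]
        ring
      have hpos0 : 0 ≤ ⟪v + t • w, H (v + t • w)⟫ := by
        have := (hspec (v + t • w)).1
        nlinarith [sq_nonneg ‖v + t • w‖]
      nlinarith [key, hpos0]
  -- norm bound ‖H s‖ ≤ lamn * ‖s‖
  have e1 : ⟪s, H (H s)⟫ = ‖H s‖ ^ 2 := by
    rw [← hsym]; exact real_inner_self_eq_norm_sq _
  have hHs : ‖H s‖ ≤ lamn * ‖s‖ := by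
    have h1 := cs s (H s)
    rw [e1] at h1
    have h2 := (hspec (H s)).2
    have h3 := (hspec s).2
    have ha : 0 ≤ ⟪s, H s⟫ := le_trans (by positivity) (hspec s).1
    have hb : 0 ≤ ⟪H s, H (H s)⟫ := le_trans (by positivity) (hspec (H s)).1
    have hab : ⟪s, H s⟫ * ⟪H s, H (H s)⟫ ≤ (lamn * ‖s‖ ^ 2) * (lamn * ‖H s‖ ^ 2) :=
      mul_le_mul h3 h2 hb (by positivity)
    rcases eq_or_lt_of_le (norm_nonneg (H s)) with hz | hz
    · rw [← hz]; positivity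
    · have hx2 : ‖H s‖ ^ 2 ≤ (lamn * ‖s‖) ^ 2 := by
        have h4 : (‖H s‖ ^ 2) ^ 2 ≤ lamn ^ 2 * ‖s‖ ^ 2 * ‖H s‖ ^ 2 := by nlinarith
        have h5 : 0 < ‖H s‖ ^ 2 := by positivity
        nlinarith
      nlinarith [hx2, hz, mul_nonneg hlamn0.le (norm_nonneg s)]
  -- residual lower bound
  have hlow : (1 - etabar) * ‖g‖ ≤ ‖H s‖ := by
    have : ‖g‖ ≤ ‖H s + g‖ + ‖H s‖ := by
      calc ‖g‖ = ‖(H s + g) - H s‖ := by rw [add_sub_cancel_left]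
        _ ≤ ‖H s + g‖ + ‖H s‖ := norm_sub_le _ _
    nlinarith
  have hslow : (1 - etabar) * ‖g‖ ≤ lamn * ‖s‖ := le_trans hlow hHs
  -- inner products
  have hpos : lam1 * ‖s‖ ^ 2 ≤ ⟪s, H s⟫ := (hspec s).1
  have hgs : ⟪g, s⟫ = -⟪s, H s⟫ := by
    rw [real_inner_comm]; linarith [hcg]
  have hsHs_pos : 0 < ⟪s, H s⟫ := lt_of_lt_of_le (by positivity) hpos
  have habs : |⟪g, s⟫| = ⟪s, H s⟫ := by
    rw [hgs, abs_neg, abs_of_pos hsHs_pos]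
  have hcsn : |⟪g, s⟫| ≤ ‖g‖ * ‖s‖ := abs_real_inner_le_norm g s
  refine ⟨?_, ?_, ?_⟩
  · rw [habs, le_div_iff₀ (by positivity)]
    have h1 : lam1 * ((1 - etabar) / lamn) * (‖g‖ * ‖s‖)
        = lam1 * (((1 - etabar) * ‖g‖) / lamn) * ‖s‖ := by ring
    rw [h1]
    have h2 : ((1 - etabar) * ‖g‖) / lamn ≤ ‖s‖ := by
      rw [div_le_iff₀ hlamn0]; linarith [hslow]
    calc lam1 * (((1 - etabar) * ‖g‖) / lamn) * ‖s‖ ≤ lam1 * ‖s‖ * ‖s‖ := by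
          nlinarith [mul_nonneg (mul_nonneg hlam1.le hsn.le) (sub_nonneg.mpr h2)]
      _ ≤ ⟪s, H s⟫ := by nlinarith
  · rw [div_le_one (by positivity)]; exact hcsn
  · rw [hgs, neg_neg, ge_iff_le]
    have h2 : ((1 - etabar) / lamn) * ‖g‖ ≤ ‖s‖ := by
      rw [div_mul_eq_mul_div, div_le_iff₀ hlamn0]; linarith [hslow]
    have h3 : 0 ≤ ((1 - etabar) / lamn) * ‖g‖ := by
      have h4 : (0:ℝ) ≤ 1 - etabar := by linarith
      positivity
    have hX2 : (((1 - etabar) / lamn) * ‖g‖) ^ 2 ≤ ‖s‖ ^ 2 := by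
      rw [sq, sq]; exact mul_self_le_mul_self h3 h2
    calc lam1 * ((1 - etabar) / lamn) ^ 2 * ‖g‖ ^ 2
        = lam1 * (((1 - etabar) / lamn) * ‖g‖) ^ 2 := by ring
      _ ≤ lam1 * ‖s‖ ^ 2 := mul_le_mul_of_nonneg_left hX2 hlam1.le
      _ ≤ ⟪s, H s⟫ := hpos
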